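/- arXiv:2603.18450 — 4 statements merged into one kernel-verified Lean document; each statement's English description precedes it below -/
import Mathlib

section
/- Let φ : ℝ≥0 × ℝ^n → ℝ^n be a semiflow (φ(0,x) = x and φ(τ+ϑ,x) = φ(τ,φ(ϑ,x)) for all τ,ϑ ≥ 0). Let C_B and C_S be subsets of ℝ^n such that C_B ⊆ C_S and C_B is invariant under φ (x ∈ C_B implies φ(τ,x) ∈ C_B for all τ ≥ 0). Fix T > 0 and define C_I* = {x : φ(τ,x) ∈ C_S for all τ ∈ [0,T], and φ(T,x) ∈ C_B}. Then x ∈ C_I* implies φ(τ,x) ∈ C_I* for all τ ≥ 0; that is, C_I* is invariant under φ. -/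
/-- The expanded implicit safe set `C_I*` is invariant under the semiflow. -/
theorem CIstar_invariant {n : ℕ}
    (φ : ℝ → (Fin n → ℝ) → (Fin n → ℝ))
    (h0 : ∀ x, φ 0 x = x)
    (hsemi : ∀ τ ϑ : ℝ, 0 ≤ τ → 0 ≤ ϑ → ∀ x, φ (τ + ϑ) x = φ τ (φ ϑ x))
    (CB CS : Set (Fin n → ℝ)) (hBS : CB ⊆ CS)
    (hInv : ∀ x ∈ CB, ∀ τ : ℝ, 0 ≤ τ → φ τ x ∈ CB)
    (T : ℝ) (hT : 0 < T)
    (CIstar : Set (Fin n → ℝ))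
    (hCI : CIstar = {x | (∀ τ ∈ Set.Icc (0 : ℝ) T, φ τ x ∈ CS) ∧ φ T x ∈ CB}) :
    ∀ x ∈ CIstar, ∀ τ : ℝ, 0 ≤ τ → φ τ x ∈ CIstar := by
  subst hCI
  rintro x ⟨hS, hB⟩ τ hτ
  constructor
  · intro σ ⟨hσ0, hσT⟩
    have key : φ σ (φ τ x) = φ (σ + τ) x := (hsemi σ τ hσ0 hτ x).symm
    rw [key]
    by_cases h : σ + τ ≤ T
    · exact hS _ ⟨by linarith, h⟩
    · have h1 : 0 ≤ σ + τ - T := by linarith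
      have : φ (σ + τ) x = φ (σ + τ - T) (φ T x) := by
        have := hsemi (σ + τ - T) T h1 hT.le x
        rwa [sub_add_cancel] at this
      rw [this]
      exact hBS (hInv _ hB _ h1)
  · have : φ T (φ τ x) = φ τ (φ T x) := by
      rw [← hsemi T τ hT.le hτ x, add_comm, hsemi τ T hτ hT.le x]
    rw [this]
    exact hInv _ hB _ hτ
end

section
/- If x ∈ C_I* then φ(τ, φ(ϑ, x)) ∈ C_S for all τ ∈ [0,T] and all ϑ ≥ 0. -/
/-- Key intermediate step: `φ(τ, φ(ϑ, x)) ∈ C_S` for all `τ ∈ [0,T]` and `ϑ ≥ 0`. -/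
theorem CIstar_shifted_safe {n : ℕ}
    (φ : ℝ → (Fin n → ℝ) → (Fin n → ℝ))
    (h0 : ∀ x, φ 0 x = x)
    (hsemi : ∀ τ ϑ : ℝ, 0 ≤ τ → 0 ≤ ϑ → ∀ x, φ (τ + ϑ) x = φ τ (φ ϑ x))
    (CB CS : Set (Fin n → ℝ)) (hBS : CB ⊆ CS)
    (hInv : ∀ x ∈ CB, ∀ τ : ℝ, 0 ≤ τ → φ τ x ∈ CB)
    (T : ℝ) (hT : 0 < T)
    (CIstar : Set (Fin n → ℝ))
    (hCI : CIstar = {x | (∀ τ ∈ Set.Icc (0 : ℝ) T, φ τ x ∈ CS) ∧ φ T x ∈ CB}) :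
    ∀ x ∈ CIstar, ∀ τ ∈ Set.Icc (0 : ℝ) T, ∀ ϑ : ℝ, 0 ≤ ϑ → φ τ (φ ϑ x) ∈ CS := by
  intro x hx τ hτ ϑ hϑ
  rw [hCI] at hx
  obtain ⟨hS, hB⟩ := hx
  obtain ⟨hτ0, hτT⟩ := hτ
  rw [← hsemi τ ϑ hτ0 hϑ]
  rcases le_or_gt (τ + ϑ) T with h | h
  · exact hS (τ + ϑ) ⟨by linarith, h⟩
  · have hs : 0 ≤ τ + ϑ - T := by linarith
    have : φ (τ + ϑ) x = φ (τ + ϑ - T) (φ T x) := by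
      rw [← hsemi _ T hs hT.le]; ring_nf
    rw [this]
    exact hBS (hInv _ hB _ hs)
end

section
/- For the augmented semiflow φ̂ on ℝ^n × ℝ^p with augmented backup set Ĉ_B ⊆ Ĉ_S both invariant conditions as before (Ĉ_B ⊆ Ĉ_S, Ĉ_B invariant under φ̂), the augmented expanded set Ĉ_I* = {x̂ : φ̂(τ,x̂) ∈ Ĉ_S for all τ ∈ [0,T], φ̂(T,x̂) ∈ Ĉ_B} is invariant under φ̂. -/
/-- The augmented expanded set `Ĉ_I*` is invariant under the augmented semiflow. -/
theorem augmented_CIstar_invariant {n p : ℕ}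
    (φ : ℝ → ((Fin n → ℝ) × (Fin p → ℝ)) → ((Fin n → ℝ) × (Fin p → ℝ)))
    (h0 : ∀ x, φ 0 x = x)
    (hsemi : ∀ τ ϑ : ℝ, 0 ≤ τ → 0 ≤ ϑ → ∀ x, φ (τ + ϑ) x = φ τ (φ ϑ x))
    (h hb : (Fin n → ℝ) → ℝ)
    (CS CB : Set ((Fin n → ℝ) × (Fin p → ℝ)))
    (hCS : CS = {x | 0 ≤ h x.1}) (hCB : CB = {x | 0 ≤ hb x.1})
    (hBS : CB ⊆ CS)
    (hInv : ∀ x ∈ CB, ∀ τ : ℝ, 0 ≤ τ → φ τ x ∈ CB)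
    (T : ℝ) (hT : 0 < T)
    (CIstar : Set ((Fin n → ℝ) × (Fin p → ℝ)))
    (hCI : CIstar = {x | (∀ τ ∈ Set.Icc (0 : ℝ) T, φ τ x ∈ CS) ∧ φ T x ∈ CB}) :
    ∀ x ∈ CIstar, ∀ τ : ℝ, 0 ≤ τ → φ τ x ∈ CIstar := by
  subst hCI
  rintro x ⟨hS, hB⟩ t ht
  constructor
  · intro τ ⟨hτ0, hτT⟩
    rw [← hsemi τ t hτ0 ht]
    by_cases hle : τ + t ≤ T
    · exact hS _ ⟨by linarith, hle⟩
    · have : τ + t = (τ + t - T) + T := by ring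
      rw [this, hsemi _ T (by linarith) hT.le]
      exact hBS (hInv _ hB _ (by linarith))
  · rw [← hsemi T t hT.le ht, show T + t = t + T by ring, hsemi t T ht hT.le]
    exact hInv _ hB t ht
end

section
/- Let h : ℝ → ℝ be continuously differentiable along a trajectory, and suppose y : ℝ≥0 → ℝ is differentiable with ẏ(t) ≥ -α(y(t)) for all t ≥ 0, where α : ℝ → ℝ is locally Lipschitz, strictly increasing, and α(0) = 0. If y(0) ≥ 0 then y(t) ≥ 0 for all t ≥ 0. -/
/-- Scalar comparison lemma: if `ẏ ≥ -α(y)` with `α` locally Lipschitz, strictly increasing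
and `α(0) = 0`, then `y(0) ≥ 0` implies `y(t) ≥ 0` for all `t ≥ 0`. -/
theorem comparison_nonneg
    (α : ℝ → ℝ) (hLip : LocallyLipschitz α) (hMono : StrictMono α) (hα0 : α 0 = 0)
    (y : ℝ → ℝ) (y' : ℝ → ℝ)
    (hy : ∀ t : ℝ, 0 ≤ t → HasDerivAt y (y' t) t)
    (hineq : ∀ t : ℝ, 0 ≤ t → y' t ≥ -α (y t))
    (h0 : 0 ≤ y 0) :
    ∀ t : ℝ, 0 ≤ t → 0 ≤ y t := by
  intro t ht
  by_contra hneg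
  push_neg at hneg
  -- continuity of y on [0, t]
  have hcont : ContinuousOn y (Set.Icc 0 t) := fun u hu =>
    ((hy u hu.1).continuousAt).continuousWithinAt
  -- the set where y is nonnegative, inside [0, t]
  set S : Set ℝ := Set.Icc 0 t ∩ y ⁻¹' Set.Ici 0 with hS
  have hSne : S.Nonempty := ⟨0, ⟨le_refl 0, ht⟩, h0⟩
  have hSbdd : BddAbove S := ⟨t, fun u hu => hu.1.2⟩
  have hSclosed : IsClosed S :=
    hcont.preimage_isClosed_of_isClosed isClosed_Icc isClosed_Ici
  set s := sSup S with hs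
  have hsmem : s ∈ S := hSclosed.csSup_mem hSne hSbdd
  have hs0 : (0:ℝ) ≤ s := hsmem.1.1
  have hst : s ≤ t := hsmem.1.2
  have hys : 0 ≤ y s := hsmem.2
  have hst' : s < t := by
    rcases lt_or_eq_of_le hst with h | h
    · exact h
    · rw [h] at hys; linarith
  -- on (s, t], y < 0
  have hylt : ∀ u, s < u → u ≤ t → y u < 0 := by
    intro u hsu hut
    by_contra h
    push_neg at h
    have huS : u ∈ S := ⟨⟨hs0.trans hsu.le, hut⟩, h⟩
    exact absurd (le_csSup hSbdd huS) (not_le.2 hsu)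
  -- y is strictly increasing on [s, t]
  have hmono : StrictMonoOn y (Set.Icc s t) := by
    apply strictMonoOn_of_deriv_pos (convex_Icc s t)
      (hcont.mono (Set.Icc_subset_Icc_left hs0))
    intro u hu
    rw [interior_Icc] at hu
    have hu0 : (0:ℝ) ≤ u := hs0.trans hu.1.le
    rw [(hy u hu0).deriv]
    have hyu : y u < 0 := hylt u hu.1 hu.2.le
    have : α (y u) < 0 := hα0 ▸ hMono hyu
    linarith [hineq u hu0]
  have := hmono (Set.left_mem_Icc.2 hst) (Set.right_mem_Icc.2 hst) hst'
  linarith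
end
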